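/- Let A be an abelian category and B ⊆ A a Serre subcategory. Then the sequence K_0(B) → K_0(A) → K_0(A/B) → 0 is exact, where A/B is the Serre quotient category. -/

import Mathlib

open CategoryTheory CategoryTheory.Limits CategoryTheory.Pretriangulated

universe v u v' u'

section SerreDefs

variable (A : Type u') [Category.{v'} A] [Abelian A]

/-- A Serre subcategory of an abelian category, as a predicate on objects:
closed under subobjects, quotient objects and extensions. -/
structure IsSerreSub (P : Set A) : Prop where
  zero : ∀ X : A, IsZero X → X ∈ P
  subobj : ∀ {X Y : A} (f : X ⟶ Y), Mono f → Y ∈ P → X ∈ P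
  quot : ∀ {X Y : A} (f : X ⟶ Y), Epi f → X ∈ P → Y ∈ P
  extension : ∀ S : ShortComplex A, S.ShortExact → S.X₁ ∈ P → S.X₃ ∈ P → S.X₂ ∈ P

/-- The Serre subcategory generated by a set of objects. -/
def serreClosure (S : Set A) : Set A :=
  {X | ∀ P : Set A, IsSerreSub A P → S ⊆ P → X ∈ P}

/-- A generator of an abelian category: an object not contained in any proper
Serre subcategory. -/
def IsAbGenerator (G : A) : Prop :=
  ∀ P : Set A, IsSerreSub A P → P ≠ Set.univ → G ∉ P

end SerreDefs

section SerreQuotient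

variable (A : Type u') [Category.{v'} A] [Abelian A]

/-- The class of morphisms whose kernel and cokernel both lie in `P`; the Serre
quotient `A/P` is the localization of `A` at this class of morphisms. -/
def serreW (P : Set A) : MorphismProperty A :=
  fun _ _ f => Limits.kernel f ∈ P ∧ Limits.cokernel f ∈ P

end SerreQuotient

section K0Ab

variable (A : Type u') [Category.{v'} A] [Abelian A]

/-- Relations for the Grothendieck group of an abelian category. -/
def K0AbRel : AddSubgroup (FreeAbelianGroup A) :=
  AddSubgroup.closure {x | ∃ S : ShortComplex A, S.ShortExact ∧
    x = FreeAbelianGroup.of S.X₂ - FreeAbelianGroup.of S.X₁ - FreeAbelianGroup.of S.X₃}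

/-- The Grothendieck group `K₀` of an abelian category: the free abelian group on
objects modulo the relations `[X₂] = [X₁] + [X₃]` for short exact sequences
`0 → X₁ → X₂ → X₃ → 0`. -/
def K0Ab := FreeAbelianGroup A ⧸ K0AbRel A

noncomputable instance : AddCommGroup (K0Ab A) :=
  QuotientAddGroup.Quotient.addCommGroup (K0AbRel A)

/-- The class of an object in `K₀` of an abelian category. -/
def K0AbCls (X : A) : K0Ab A := QuotientAddGroup.mk (FreeAbelianGroup.of X)

end K0Ab

section K0Serre

variable (A : Type u') [Category.{v'} A] [Abelian A]

/-- Relations for the Grothendieck group of a Serre subcategory `P ⊆ A`: short exact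
sequences of `A` all of whose terms lie in `P` (these are exactly the short exact
sequences of the abelian category `P`). -/
def K0SerreRel (P : Set A) : AddSubgroup (FreeAbelianGroup P) :=
  AddSubgroup.closure {x | ∃ S : ShortComplex A, S.ShortExact ∧
    ∃ (h₁ : S.X₁ ∈ P) (h₂ : S.X₂ ∈ P) (h₃ : S.X₃ ∈ P),
      x = FreeAbelianGroup.of ⟨S.X₂, h₂⟩ - FreeAbelianGroup.of ⟨S.X₁, h₁⟩ -
        FreeAbelianGroup.of ⟨S.X₃, h₃⟩}

/-- The Grothendieck group `K₀` of a Serre subcategory. -/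
def K0Serre (P : Set A) := FreeAbelianGroup P ⧸ K0SerreRel A P

noncomputable instance (P : Set A) : AddCommGroup (K0Serre A P) :=
  QuotientAddGroup.Quotient.addCommGroup (K0SerreRel A P)

/-- The class of an object of `P` in `K₀(P)`. -/
def K0SerreCls (P : Set A) (X : P) : K0Serre A P :=
  QuotientAddGroup.mk (FreeAbelianGroup.of X)

end K0Serre



section AuxAll

open CategoryTheory.Abelian
open CategoryTheory.Abelian.Pseudoelement
open scoped Pseudoelement

attribute [local instance] CategoryTheory.Abelian.Pseudoelement.objectToSort
attribute [local instance] CategoryTheory.Abelian.Pseudoelement.homToFun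

open ZeroObject

section AuxSES
variable {A : Type u'} [Category.{v'} A] [Abelian A]

lemma ses_ker_im {X Y : A} (u : X ⟶ Y) :
    (ShortComplex.mk (kernel.ι u) (Abelian.factorThruImage u)
      (by rw [← cancel_mono (Abelian.image.ι u)]; simp)).ShortExact := by
  refine ShortComplex.ShortExact.mk' ?_ inferInstance inferInstance
  apply ShortComplex.exact_of_f_is_kernel
  exact KernelFork.IsLimit.ofι _ _
    (fun k hk => kernel.lift u k (by
      dsimp at hk
      rw [← Abelian.image.fac u, ← Category.assoc, hk, zero_comp]))
    (fun k hk => by simp)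
    (fun k hk m hm => by rw [← cancel_mono (kernel.ι u)]; simpa using hm)

lemma ses_im_coker {X Y : A} (u : X ⟶ Y) :
    (ShortComplex.mk (Abelian.image.ι u) (cokernel.π u)
      (kernel.condition (cokernel.π u))).ShortExact := by
  refine ShortComplex.ShortExact.mk' ?_ inferInstance inferInstance
  apply ShortComplex.exact_of_f_is_kernel
  exact kernelIsKernel (cokernel.π u)

lemma pseudo_id_apply {Z : A} (z : Pseudoelement Z) : pseudoApply (𝟙 Z) z = z :=
  Quotient.inductionOn z fun a => Quotient.sound
    ⟨a.1, 𝟙 _, 𝟙 _, inferInstanceAs (Epi (𝟙 a.left)), inferInstanceAs (Epi (𝟙 a.left)),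
      by simp [app_hom]; exact Category.id_comp _⟩

lemma exact_ker {X Y : A} (u : X ⟶ Y) :
    (ShortComplex.mk (kernel.ι u) u (kernel.condition u)).Exact := by
  apply ShortComplex.exact_of_f_is_kernel
  exact kernelIsKernel u

lemma exact_coker {X Y : A} (u : X ⟶ Y) :
    (ShortComplex.mk u (cokernel.π u) (cokernel.condition u)).Exact := by
  apply ShortComplex.exact_of_g_is_cokernel
  exact cokernelIsCokernel u

end AuxSES

section AuxSerre
variable {A : Type u'} [Category.{v'} A] [Abelian A]
variable {P : Set A} (hP : IsSerreSub A P)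

include hP

lemma mem_of_iso {X Y : A} (e : X ≅ Y) (hY : Y ∈ P) : X ∈ P :=
  hP.subobj e.hom inferInstance hY

lemma mem_of_ker_im {X Y : A} (u : X ⟶ Y) (h1 : kernel u ∈ P)
    (h2 : Abelian.image u ∈ P) : X ∈ P :=
  hP.extension _ (ses_ker_im u) h1 h2

lemma mem_of_im_coker {X Y : A} (u : X ⟶ Y) (h1 : Abelian.image u ∈ P)
    (h2 : cokernel u ∈ P) : Y ∈ P :=
  hP.extension _ (ses_im_coker u) h1 h2

lemma serreW_id (X : A) : serreW A P (𝟙 X) :=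
  ⟨hP.zero _ (IsZero.of_iso (isZero_zero A) (kernel.ofMono (𝟙 X))),
   hP.zero _ (IsZero.of_iso (isZero_zero A) (cokernel.ofEpi (𝟙 X)))⟩

lemma serreW_comp {X Y Z : A} {s : X ⟶ Y} {t : Y ⟶ Z} (hs : serreW A P s)
    (ht : serreW A P t) : serreW A P (s ≫ t) := by
  constructor
  · -- kernel (s ≫ t) ∈ P
    set u : kernel (s ≫ t) ⟶ kernel t :=
      kernel.lift t (kernel.ι (s ≫ t) ≫ s)
        (by rw [Category.assoc]; exact kernel.condition _) with hu
    apply mem_of_ker_im hP u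
    · -- kernel u ∈ P, mono into kernel s
      have hv0 : (kernel.ι u ≫ kernel.ι (s ≫ t)) ≫ s = 0 := by
        have : u ≫ kernel.ι t = kernel.ι (s ≫ t) ≫ s := by simp [hu]
        rw [Category.assoc, ← this, ← Category.assoc, kernel.condition, zero_comp]
      set v : kernel u ⟶ kernel s := kernel.lift s _ hv0 with hv
      have hmono : Mono v := by
        have : v ≫ kernel.ι s = kernel.ι u ≫ kernel.ι (s ≫ t) := by simp [hv]
        have h2 : Mono (v ≫ kernel.ι s) := by rw [this]; exact mono_comp _ _
        exact mono_of_mono v (kernel.ι s)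
      exact hP.subobj v hmono hs.1
    · exact hP.subobj (Abelian.image.ι u) inferInstance ht.1
  · -- cokernel (s ≫ t) ∈ P
    set u : cokernel (s ≫ t) ⟶ cokernel t :=
      cokernel.desc (s ≫ t) (cokernel.π t)
        (by rw [Category.assoc, cokernel.condition, comp_zero]) with hu
    apply mem_of_ker_im hP u
    · -- kernel u ∈ P : epi image of cokernel s
      have hv'0 : (t ≫ cokernel.π (s ≫ t)) ≫ u = 0 := by
        simp [hu]
      set v' : Y ⟶ kernel u := kernel.lift u _ hv'0 with hv'
      have hsv' : s ≫ v' = 0 := by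
        rw [← cancel_mono (kernel.ι u)]
        simp only [hv', Category.assoc, kernel.lift_ι, zero_comp]
        rw [← Category.assoc, cokernel.condition]
      set v : cokernel s ⟶ kernel u := cokernel.desc s v' hsv' with hv
      have hepi : Epi v := by
        apply epi_of_pseudo_surjective
        intro k
        obtain ⟨z, hz⟩ := pseudo_surjective_of_epi (cokernel.π (s ≫ t)) (kernel.ι u k)
        have hz0 : (cokernel.π t) z = 0 := by
          have e1 : cokernel.π (s ≫ t) ≫ u = cokernel.π t := by simp [hu]
          rw [← e1, Pseudoelement.comp_apply, hz, ← Pseudoelement.comp_apply,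
            kernel.condition, Pseudoelement.zero_apply]
        obtain ⟨y, hy'⟩ := pseudo_exact_of_exact (exact_coker t) z hz0
        have hy : pseudoApply t y = z := hy'
        refine ⟨cokernel.π s y, ?_⟩
        apply pseudo_injective_of_mono (kernel.ι u)
        have e2 : cokernel.π s ≫ v ≫ kernel.ι u = t ≫ cokernel.π (s ≫ t) := by
          simp [hv, hv']
        calc kernel.ι u (v ((cokernel.π s) y))
            = (cokernel.π s ≫ v ≫ kernel.ι u) y := by
              rw [Pseudoelement.comp_apply, Pseudoelement.comp_apply]
          _ = (t ≫ cokernel.π (s ≫ t)) y := by rw [e2]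
          _ = kernel.ι u k := by rw [Pseudoelement.comp_apply, hy, hz]
      exact hP.quot v hepi hs.2
    · exact hP.subobj (Abelian.image.ι u) inferInstance ht.2

lemma serreW_neg {X Y : A} {u : X ⟶ Y} (h : serreW A P u) : serreW A P (-u) := by
  haveI : IsIso (-𝟙 Y) := ⟨⟨-𝟙 Y, by simp, by simp⟩⟩
  have e : -u = u ≫ (-𝟙 Y) := by simp
  constructor
  · rw [e]; exact mem_of_iso hP (kernelCompMono u (-𝟙 Y)) h.1
  · rw [e]; exact mem_of_iso hP (cokernelCompIsIso u (-𝟙 Y)) h.2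

end AuxSerre

section CalcFrac
variable {A : Type u'} [Category.{v'} A] [Abelian A]
variable {P : Set A} (hP : IsSerreSub A P)
include hP

lemma serre_exists_leftFraction {X Y : A} (φ : (serreW A P).RightFraction X Y) :
    ∃ ψ : (serreW A P).LeftFraction X Y, φ.f ≫ ψ.s = φ.s ≫ ψ.f := by
  set Φ : φ.X' ⟶ X ⊞ Y := biprod.lift φ.s φ.f with hΦ
  set π : X ⊞ Y ⟶ cokernel Φ := cokernel.π Φ with hπ
  have e0 : (φ.s ≫ biprod.inl) ≫ π + (φ.f ≫ biprod.inr) ≫ π = 0 := by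
    rw [← Preadditive.add_comp, ← biprod.lift_eq, cokernel.condition]
  have eneg : (φ.f ≫ biprod.inr) ≫ π = -((φ.s ≫ biprod.inl) ≫ π) :=
    eq_neg_of_add_eq_zero_right e0
  -- kernel of (biprod.inr ≫ π) is an epi image of kernel φ.s
  have hti : (kernel.ι φ.s ≫ φ.f) ≫ biprod.inr ≫ π = 0 := by
    calc (kernel.ι φ.s ≫ φ.f) ≫ biprod.inr ≫ π
        = kernel.ι φ.s ≫ (φ.f ≫ biprod.inr) ≫ π := by
          simp only [Category.assoc]
      _ = kernel.ι φ.s ≫ (-((φ.s ≫ biprod.inl) ≫ π)) := by rw [eneg]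
      _ = -(kernel.ι φ.s ≫ (φ.s ≫ biprod.inl) ≫ π) := by rw [Preadditive.comp_neg]
      _ = 0 := by
          rw [← Category.assoc, ← Category.assoc, kernel.condition, zero_comp, zero_comp, neg_zero]
  set t : kernel φ.s ⟶ kernel (biprod.inr ≫ π) := kernel.lift _ _ hti with hT
  have htepi : Epi t := by
    apply epi_of_pseudo_surjective
    intro y
    have h1 : π ((biprod.inr : Y ⟶ X ⊞ Y) (kernel.ι (biprod.inr ≫ π) y)) = 0 := by
      rw [← Pseudoelement.comp_apply, ← Pseudoelement.comp_apply, kernel.condition,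
        Pseudoelement.zero_apply]
    obtain ⟨x', hx'⟩ := pseudo_exact_of_exact (exact_coker Φ) _ h1
    have hx : pseudoApply Φ x' = pseudoApply biprod.inr
        (pseudoApply (kernel.ι (biprod.inr ≫ π)) y) := hx'
    have hsx : φ.s x' = 0 := by
      have h2 : (Φ ≫ biprod.fst) x' = 0 := by
        rw [Pseudoelement.comp_apply, hx, ← Pseudoelement.comp_apply, biprod.inr_fst,
          Pseudoelement.zero_apply]
      have h3 : Φ ≫ biprod.fst = φ.s := by simp [hΦ]
      rwa [h3] at h2
    obtain ⟨k, hk'⟩ := pseudo_exact_of_exact (exact_ker φ.s) x' hsx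
    have hk : (kernel.ι φ.s) k = x' := hk'
    refine ⟨k, ?_⟩
    apply pseudo_injective_of_mono (kernel.ι (biprod.inr ≫ π))
    have e2 : t ≫ kernel.ι (biprod.inr ≫ π) = kernel.ι φ.s ≫ φ.f := by simp [hT]
    calc kernel.ι (biprod.inr ≫ π) (t k)
        = (t ≫ kernel.ι (biprod.inr ≫ π)) k := by rw [Pseudoelement.comp_apply]
      _ = (kernel.ι φ.s ≫ φ.f) k := by rw [e2]
      _ = φ.f x' := by rw [Pseudoelement.comp_apply, hk]
      _ = (Φ ≫ biprod.snd) x' := by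
          rw [show Φ ≫ biprod.snd = φ.f from by simp [hΦ]]
      _ = (biprod.inr ≫ (biprod.snd : X ⊞ Y ⟶ Y)) (kernel.ι (biprod.inr ≫ π) y) := by
          rw [Pseudoelement.comp_apply, hx, ← Pseudoelement.comp_apply]
      _ = kernel.ι (biprod.inr ≫ π) y := by
          rw [biprod.inr_snd, pseudo_id_apply]
  have hker : kernel (biprod.inr ≫ π) ∈ P := hP.quot t htepi φ.hs.1
  -- cokernel of (biprod.inr ≫ π) is isomorphic to cokernel φ.s
  have hq0 : Φ ≫ biprod.desc (cokernel.π φ.s) 0 = 0 := by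
    rw [hΦ, biprod.lift_desc]; simp
  set q : cokernel Φ ⟶ cokernel φ.s := cokernel.desc Φ _ hq0 with hq
  have ha0 : (biprod.inr ≫ π) ≫ q = 0 := by
    rw [hπ, Category.assoc, hq, cokernel.π_desc]; simp
  set a : cokernel (biprod.inr ≫ π) ⟶ cokernel φ.s := cokernel.desc _ q ha0 with ha
  have hb0 : φ.s ≫ biprod.inl ≫ π ≫ cokernel.π (biprod.inr ≫ π) = 0 := by
    have : (φ.s ≫ biprod.inl) ≫ π = -((φ.f ≫ biprod.inr) ≫ π) :=
      eq_neg_of_add_eq_zero_left e0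
    calc φ.s ≫ biprod.inl ≫ π ≫ cokernel.π (biprod.inr ≫ π)
        = ((φ.s ≫ biprod.inl) ≫ π) ≫ cokernel.π (biprod.inr ≫ π) := by
          simp only [Category.assoc]
      _ = (-((φ.f ≫ biprod.inr) ≫ π)) ≫ cokernel.π (biprod.inr ≫ π) := by rw [this]
      _ = -(φ.f ≫ (biprod.inr ≫ π) ≫ cokernel.π (biprod.inr ≫ π)) := by
          rw [Preadditive.neg_comp]; simp only [Category.assoc]
      _ = 0 := by rw [cokernel.condition, comp_zero, neg_zero]
  set b : cokernel φ.s ⟶ cokernel (biprod.inr ≫ π) :=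
    cokernel.desc _ (biprod.inl ≫ π ≫ cokernel.π _) hb0 with hb
  have hab : a ≫ b = 𝟙 _ := by
    rw [← cancel_epi (cokernel.π (biprod.inr ≫ π)), Category.comp_id, ← cancel_epi π]
    ext
    · simp [ha, hb, hq, hπ]
    · simp [ha, hb, hq, hπ]
      rw [← Category.assoc]
      exact (cokernel.condition _).symm
  have hba : b ≫ a = 𝟙 _ := by
    rw [← cancel_epi (cokernel.π φ.s), Category.comp_id]
    simp [ha, hb, hq, hπ]
  have hcoker : cokernel (biprod.inr ≫ π) ∈ P :=
    mem_of_iso hP (Iso.mk a b hab hba) φ.hs.2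
  refine ⟨⟨biprod.inl ≫ π, -(biprod.inr ≫ π), serreW_neg hP ⟨hker, hcoker⟩⟩, ?_⟩
  dsimp
  rw [Preadditive.comp_neg,
    show φ.f ≫ biprod.inr ≫ π = (φ.f ≫ biprod.inr) ≫ π from (Category.assoc _ _ _).symm,
    eneg, neg_neg, Category.assoc]

end CalcFrac

section Ext
variable {A : Type u'} [Category.{v'} A] [Abelian A]
variable {P : Set A} (hP : IsSerreSub A P)
include hP

lemma serre_ext {X' X Y : A} (f₁ f₂ : X ⟶ Y) (s : X' ⟶ X) (hs : serreW A P s)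
    (hfac : s ≫ f₁ = s ≫ f₂) :
    ∃ (Y' : A) (t : Y ⟶ Y') (_ : serreW A P t), f₁ ≫ t = f₂ ≫ t := by
  set h : X ⟶ Y := f₁ - f₂ with hh
  have hs0 : s ≫ h = 0 := by
    rw [hh, Preadditive.comp_sub, hfac, sub_self]
  set h' : cokernel s ⟶ Y := cokernel.desc s h hs0 with hh'
  set m : Abelian.image h ⟶ Y := Abelian.image.ι h with hm
  refine ⟨cokernel m, cokernel.π m, ⟨?_, ?_⟩, ?_⟩
  · -- kernel (cokernel.π m) ∈ P
    have him : Abelian.image h ∈ P := by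
      have hcond : h' ≫ cokernel.π h = 0 := by
        rw [← cancel_epi (cokernel.π s)]
        simp [hh']
      set u' : cokernel s ⟶ Abelian.image h := kernel.lift (cokernel.π h) h' hcond with hu'
      have hcomp : cokernel.π s ≫ u' = Abelian.factorThruImage h := by
        rw [← cancel_mono (Abelian.image.ι h)]
        simp [hu', hh']
      have hepi : Epi u' := by
        have : Epi (cokernel.π s ≫ u') := by rw [hcomp]; infer_instance
        exact epi_of_epi (cokernel.π s) u'
      exact hP.quot u' hepi hs.2
    haveI hmono : Mono (Abelian.factorThruImage m) := by
      have hfac2 : Abelian.factorThruImage m ≫ Abelian.image.ι m = m := Abelian.image.fac m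
      have : Mono (Abelian.factorThruImage m ≫ Abelian.image.ι m) := by
        rw [hfac2]; infer_instance
      exact mono_of_mono (Abelian.factorThruImage m) (Abelian.image.ι m)
    haveI : IsIso (Abelian.factorThruImage m) := isIso_of_mono_of_epi _
    exact mem_of_iso hP (asIso (Abelian.factorThruImage m)).symm him
  · exact hP.zero _ (IsZero.of_iso (isZero_zero A) (cokernel.ofEpi _))
  · have h1 : (Abelian.factorThruImage h ≫ m) ≫ cokernel.π m = 0 := by
      rw [Category.assoc, cokernel.condition, comp_zero]
    have h2 : Abelian.factorThruImage h ≫ m = h := Abelian.image.fac h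
    rw [h2] at h1
    rw [← sub_eq_zero, ← Preadditive.sub_comp, ← hh]
    exact h1

lemma serre_hasLeftCalculusOfFractions :
    (serreW A P).HasLeftCalculusOfFractions :=
  { id_mem := serreW_id hP
    comp_mem := fun s t hs ht => serreW_comp hP hs ht
    exists_leftFraction := fun _ _ φ => serre_exists_leftFraction hP φ
    ext := fun _ _ _ f₁ f₂ s hs hfac => serre_ext hP f₁ f₂ s hs hfac }

end Ext

section K0lemmas
variable {A : Type u'} [Category.{v'} A] [Abelian A]

lemma K0AbCls_rel {S : ShortComplex A} (hS : S.ShortExact) :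
    K0AbCls A S.X₂ = K0AbCls A S.X₁ + K0AbCls A S.X₃ := by
  unfold K0AbCls
  change (QuotientAddGroup.mk (FreeAbelianGroup.of S.X₂) : FreeAbelianGroup A ⧸ K0AbRel A) =
    QuotientAddGroup.mk (FreeAbelianGroup.of S.X₁ + FreeAbelianGroup.of S.X₃)
  rw [QuotientAddGroup.eq_iff_sub_mem]
  apply AddSubgroup.subset_closure
  exact ⟨S, hS, by abel⟩

lemma K0AbCls_ker_im {X Y : A} (u : X ⟶ Y) :
    K0AbCls A X = K0AbCls A (kernel u) + K0AbCls A (Abelian.image u) :=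
  K0AbCls_rel (ses_ker_im u)

lemma K0AbCls_im_coker {X Y : A} (u : X ⟶ Y) :
    K0AbCls A Y = K0AbCls A (Abelian.image u) + K0AbCls A (cokernel u) :=
  K0AbCls_rel (ses_im_coker u)

lemma K0AbCls_zero {X : A} (hX : IsZero X) : K0AbCls A X = 0 := by
  have hS : (ShortComplex.mk (𝟙 X) (𝟙 X) (by
      rw [hX.eq_of_src (𝟙 X) 0]; simp)).ShortExact := by
    refine ShortComplex.ShortExact.mk' ?_ inferInstance inferInstance
    exact ShortComplex.exact_of_isZero_X₂ _ hX
  have := K0AbCls_rel hS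
  simpa using this.symm

lemma epi_to_isZero {X Z : A} (hZ : IsZero Z) (u : X ⟶ Z) : Epi u := by
  constructor
  intro W a b h
  rw [hZ.eq_of_src a b]

lemma K0AbCls_iso {X Y : A} (e : X ≅ Y) : K0AbCls A X = K0AbCls A Y := by
  have hS : (ShortComplex.mk e.hom (0 : Y ⟶ (0 : A)) comp_zero).ShortExact := by
    refine ShortComplex.ShortExact.mk' ?_ inferInstance (epi_to_isZero (isZero_zero A) _)
    rw [ShortComplex.exact_iff_epi _ rfl]
    infer_instance
  have := K0AbCls_rel hS
  simp only [K0AbCls_zero (isZero_zero A), add_zero] at this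
  exact this.symm

lemma K0Ab_hom_eq {G : Type*} [AddCommGroup G] (u v : K0Ab A →+ G)
    (h : ∀ X : A, u (K0AbCls A X) = v (K0AbCls A X)) (x : K0Ab A) : u x = v x := by
  obtain ⟨z, rfl⟩ := QuotientAddGroup.mk_surjective x
  induction z using FreeAbelianGroup.induction_on with
  | zero => exact (map_zero u).trans (map_zero v).symm
  | of c => exact h c
  | neg c ih =>
      exact (map_neg u (QuotientAddGroup.mk (FreeAbelianGroup.of c))).trans
        ((congrArg Neg.neg ih).trans (map_neg v _).symm)
  | add y z ihy ihz =>
      exact (map_add u (QuotientAddGroup.mk y) (QuotientAddGroup.mk z)).trans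
        ((congrArg₂ (· + ·) ihy ihz).trans (map_add v _ _).symm)

end K0lemmas

section Loc
variable {A : Type u'} [Category.{v'} A] [Abelian A]
variable {C : Type u} [Category.{v} C] [Abelian C]
variable {P : Set A} (hP : IsSerreSub A P)
include hP

lemma mem_of_isZero_obj (Q : A ⥤ C) [Q.Additive] [Q.IsLocalization (serreW A P)]
    {T : A} (hT : IsZero (Q.obj T)) : T ∈ P := by
  haveI := serre_hasLeftCalculusOfFractions hP
  have hmap : Q.map (𝟙 T) = Q.map 0 := by
    rw [CategoryTheory.Functor.map_id Q, CategoryTheory.Functor.map_zero Q, hT.eq_of_src (𝟙 (Q.obj T)) 0]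
  rw [MorphismProperty.map_eq_iff_postcomp Q (serreW A P)] at hmap
  obtain ⟨Z, s, hsW, hfac⟩ := hmap
  rw [Category.id_comp, zero_comp] at hfac
  subst hfac
  exact mem_of_iso hP kernelZeroIsoSource.symm hsW.1

lemma serreW_of_isIso_map (Q : A ⥤ C) [Q.Additive] [PreservesFiniteLimits Q]
    [PreservesFiniteColimits Q] [Q.IsLocalization (serreW A P)]
    {X Y : A} (h : X ⟶ Y) (hiso : IsIso (Q.map h)) : serreW A P h := by
  constructor
  · apply mem_of_isZero_obj hP Q
    refine IsZero.of_iso ?_ (PreservesKernel.iso Q h)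
    exact IsZero.of_iso (isZero_zero C) (kernel.ofMono (Q.map h))
  · apply mem_of_isZero_obj hP Q
    refine IsZero.of_iso ?_ (PreservesCokernel.iso Q h)
    exact IsZero.of_iso (isZero_zero C) (cokernel.ofEpi (Q.map h))

variable {G : Type*} [AddCommGroup G] (π : K0Ab A →+ G)

lemma pi_eq_of_serreW (hπ : ∀ T : A, T ∈ P → π (K0AbCls A T) = 0)
    {X Y : A} (s : X ⟶ Y) (hs : serreW A P s) :
    π (K0AbCls A X) = π (K0AbCls A Y) := by
  have h1 := congrArg π (K0AbCls_ker_im s)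
  have h2 := congrArg π (K0AbCls_im_coker s)
  rw [map_add, hπ _ hs.1, zero_add] at h1
  rw [map_add, hπ _ hs.2, add_zero] at h2
  rw [h1, h2]

lemma pi_eq_of_obj_iso (hπ : ∀ T : A, T ∈ P → π (K0AbCls A T) = 0)
    (Q : A ⥤ C) [Q.Additive] [PreservesFiniteLimits Q]
    [PreservesFiniteColimits Q] [Q.IsLocalization (serreW A P)]
    {X Y : A} (e : Q.obj X ≅ Q.obj Y) :
    π (K0AbCls A X) = π (K0AbCls A Y) := by
  haveI := serre_hasLeftCalculusOfFractions hP
  obtain ⟨φ, hφ⟩ := Localization.exists_leftFraction Q (serreW A P) e.hom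
  have hfs : Q.map φ.f = e.hom ≫ Q.map φ.s := by
    rw [hφ]
    exact (MorphismProperty.LeftFraction.map_comp_map_s φ Q
      (Localization.inverts Q (serreW A P))).symm
  haveI : IsIso (Q.map φ.s) := Localization.inverts Q (serreW A P) φ.s φ.hs
  haveI : IsIso (Q.map φ.f) := by rw [hfs]; infer_instance
  have hWf : serreW A P φ.f := serreW_of_isIso_map hP Q φ.f inferInstance
  rw [pi_eq_of_serreW hP π hπ φ.f hWf, pi_eq_of_serreW hP π hπ φ.s φ.hs]

lemma pi_ses_lift (hπ : ∀ T : A, T ∈ P → π (K0AbCls A T) = 0)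
    (Q : A ⥤ C) [Q.Additive] [PreservesFiniteLimits Q]
    [PreservesFiniteColimits Q] [Q.IsLocalization (serreW A P)]
    {S : ShortComplex C} (hS : S.ShortExact) {X₁ X₂ X₃ : A}
    (e₁ : Q.obj X₁ ≅ S.X₁) (e₂ : Q.obj X₂ ≅ S.X₂) (e₃ : Q.obj X₃ ≅ S.X₃) :
    π (K0AbCls A X₂) = π (K0AbCls A X₁) + π (K0AbCls A X₃) := by
  haveI := serre_hasLeftCalculusOfFractions hP
  obtain ⟨φ, hφ⟩ := Localization.exists_leftFraction Q (serreW A P)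
    (e₂.hom ≫ S.g ≫ e₃.inv)
  haveI : IsIso (Q.map φ.s) := Localization.inverts Q (serreW A P) φ.s φ.hs
  have hfs : Q.map φ.f = (e₂.hom ≫ S.g ≫ e₃.inv) ≫ Q.map φ.s := by
    rw [hφ]
    exact (MorphismProperty.LeftFraction.map_comp_map_s φ Q
      (Localization.inverts Q (serreW A P))).symm
  haveI := hS.epi_g
  haveI : Epi (Q.map φ.f) := by rw [hfs]; infer_instance
  -- cokernel φ.f ∈ P
  have hcoker : cokernel φ.f ∈ P := by
    apply mem_of_isZero_obj hP Q
    refine IsZero.of_iso ?_ (PreservesCokernel.iso Q φ.f)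
    exact IsZero.of_iso (isZero_zero C) (cokernel.ofEpi (Q.map φ.f))
  -- kernel φ.f has same class as X₁
  have hker : π (K0AbCls A (kernel φ.f)) = π (K0AbCls A X₁) := by
    apply pi_eq_of_obj_iso hP π hπ Q
    calc Q.obj (kernel φ.f) ≅ kernel (Q.map φ.f) := PreservesKernel.iso Q φ.f
      _ ≅ kernel ((e₂.hom ≫ S.g ≫ e₃.inv) ≫ Q.map φ.s) := kernelIsoOfEq hfs
      _ ≅ kernel (e₂.hom ≫ S.g ≫ e₃.inv) := kernelCompMono _ (Q.map φ.s)
      _ ≅ kernel (S.g ≫ e₃.inv) := kernelIsIsoComp e₂.hom _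
      _ ≅ kernel S.g := kernelCompMono S.g e₃.inv
      _ ≅ S.X₁ := (IsLimit.conePointUniqueUpToIso (kernelIsKernel S.g) hS.fIsKernel)
      _ ≅ Q.obj X₁ := e₁.symm
  have h1 := congrArg π (K0AbCls_ker_im φ.f)
  have h2 := congrArg π (K0AbCls_im_coker φ.f)
  rw [map_add, hker] at h1
  rw [map_add, hπ _ hcoker, add_zero] at h2
  rw [h1, ← h2, ← pi_eq_of_serreW hP π hπ φ.s φ.hs]

end Loc

end AuxAll

open ZeroObject

variable {A : Type u'} [Category.{v'} A] [Abelian A]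
variable {C : Type u} [Category.{v} C] [Abelian C]

/-- for a Serre subcategory `P ⊆ A` with Serre quotient `Q : A ⥤ C = A/P`
(an exact localization of `A` at the morphisms with kernel and cokernel in `P`), the
sequence `K₀(P) → K₀(A) → K₀(A/P) → 0` is exact. -/
theorem stmt10 (P : Set A) (hP : IsSerreSub A P)
    (Q : A ⥤ C) [Q.Additive] [PreservesFiniteLimits Q] [PreservesFiniteColimits Q]
    [Q.IsLocalization (serreW A P)]
    (f : K0Serre A P →+ K0Ab A) (hf : ∀ X : P, f (K0SerreCls A P X) = K0AbCls A X.1)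
    (g : K0Ab A →+ K0Ab C) (hg : ∀ X : A, g (K0AbCls A X) = K0AbCls C (Q.obj X)) :
    Function.Surjective g ∧ g.ker = f.range := by
  haveI hLCF := serre_hasLeftCalculusOfFractions hP
  haveI : Q.EssSurj := Localization.essSurj Q (serreW A P)
  have hQzero : ∀ T : A, T ∈ P → IsZero (Q.obj T) := by
    intro T hT
    have hu : serreW A P (0 : T ⟶ (0 : A)) := by
      constructor
      · exact mem_of_iso hP kernelZeroIsoSource hT
      · haveI := epi_to_isZero (isZero_zero A) (0 : T ⟶ (0 : A))
        exact hP.zero _ (IsZero.of_iso (isZero_zero A) (cokernel.ofEpi _))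
    haveI : IsIso (Q.map (0 : T ⟶ (0 : A))) := Localization.inverts Q (serreW A P) _ hu
    exact IsZero.of_iso (Q.map_isZero (isZero_zero A)) (asIso (Q.map (0 : T ⟶ (0 : A))))
  constructor
  · -- surjectivity
    intro x
    obtain ⟨z, rfl⟩ := QuotientAddGroup.mk_surjective x
    induction z using FreeAbelianGroup.induction_on with
    | zero => exact ⟨0, by simp; rfl⟩
    | of c =>
        refine ⟨K0AbCls A (Q.objPreimage c), ?_⟩
        rw [hg]
        exact K0AbCls_iso (Q.objObjPreimageIso c)
    | neg c ih =>
        obtain ⟨y, hy⟩ := ih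
        exact ⟨-y, by rw [map_neg, hy]; rfl⟩
    | add z₁ z₂ ih₁ ih₂ =>
        obtain ⟨y₁, hy₁⟩ := ih₁
        obtain ⟨y₂, hy₂⟩ := ih₂
        exact ⟨y₁ + y₂, by rw [map_add, hy₁, hy₂]; rfl⟩
  · apply le_antisymm
    · -- ker g ≤ range f
      intro x hx
      set π : K0Ab A →+ K0Ab A ⧸ f.range := QuotientAddGroup.mk' f.range with hπdef
      have hπ : ∀ T : A, T ∈ P → π (K0AbCls A T) = 0 := by
        intro T hT
        rw [hπdef, QuotientAddGroup.mk'_apply, QuotientAddGroup.eq_zero_iff]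
        exact ⟨K0SerreCls A P ⟨T, hT⟩, hf ⟨T, hT⟩⟩
      set φ₀ : FreeAbelianGroup C →+ K0Ab A ⧸ f.range :=
        FreeAbelianGroup.lift (fun c => π (K0AbCls A (Q.objPreimage c))) with hφ₀
      have hrel : K0AbRel C ≤ φ₀.ker := by
        rw [K0AbRel, AddSubgroup.closure_le]
        rintro x ⟨S, hS, rfl⟩
        simp only [SetLike.mem_coe, AddMonoidHom.mem_ker, map_sub, hφ₀,
          FreeAbelianGroup.lift_apply_of]
        rw [pi_ses_lift hP π hπ Q hS (Q.objObjPreimageIso S.X₁)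
          (Q.objObjPreimageIso S.X₂) (Q.objObjPreimageIso S.X₃)]
        abel
      set φ : K0Ab C →+ K0Ab A ⧸ f.range := QuotientAddGroup.lift (K0AbRel C) φ₀ hrel
        with hφ
      have hcomp : ∀ y : K0Ab A, φ (g y) = π y := by
        refine K0Ab_hom_eq (φ.comp g) π ?_
        intro X
        rw [AddMonoidHom.comp_apply, hg]
        have h1 : φ (K0AbCls C (Q.obj X)) = π (K0AbCls A (Q.objPreimage (Q.obj X))) := by
          show φ₀ (FreeAbelianGroup.of (Q.obj X)) = _
          rw [hφ₀, FreeAbelianGroup.lift_apply_of]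
        rw [h1]
        exact pi_eq_of_obj_iso hP π hπ Q (Q.objObjPreimageIso (Q.obj X))
      have hx0 : π x = 0 := by
        rw [← hcomp x, AddMonoidHom.mem_ker.mp hx, map_zero]
      rw [hπdef, QuotientAddGroup.mk'_apply, QuotientAddGroup.eq_zero_iff] at hx0
      exact hx0
    · -- range f ≤ ker g
      rintro x ⟨y, rfl⟩
      rw [AddMonoidHom.mem_ker]
      obtain ⟨z, rfl⟩ := QuotientAddGroup.mk_surjective y
      induction z using FreeAbelianGroup.induction_on with
      | zero =>
          exact (congrArg g (map_zero f)).trans (map_zero g)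
      | of c =>
          rw [show (QuotientAddGroup.mk (FreeAbelianGroup.of c) : K0Serre A P)
            = K0SerreCls A P c from rfl, hf c, hg]
          exact K0AbCls_zero (hQzero c.1 c.2)
      | neg c ih =>
          exact (congrArg g (map_neg f (QuotientAddGroup.mk (FreeAbelianGroup.of c)))).trans
            ((map_neg g _).trans ((congrArg Neg.neg ih).trans neg_zero))
      | add z₁ z₂ ih₁ ih₂ =>
          exact (congrArg g (map_add f (QuotientAddGroup.mk z₁) (QuotientAddGroup.mk z₂))).trans
            ((map_add g _ _).trans ((congrArg₂ (· + ·) ih₁ ih₂).trans (add_zero 0)))
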